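/- Let M be a metric space, O ∈ M a basepoint, and suppose for each n there is a map fₙ : M → X into a Banach space with Lip(fₙ) ≤ 1, fₙ(O) = 0, and such that d(x,y) ≥ N(n) implies ‖fₙ(x) − fₙ(y)‖ > n³ for some N(n). Then f : M → (Σₙ ⊕ X)₁ given by f(x) = (fₙ(x)/(Kn²))ₙ with K = Σ 1/n² is a coarse embedding of M into the ℓ₁-sum of copies of X. -/

import Mathlib

/-- Given 1-Lipschitz maps `fₙ : M → X` (n ≥ 1) vanishing at a basepoint, such that
for each `n` there is `N(n)` with `d(x,y) ≥ N(n) → ‖fₙ(x) − fₙ(y)‖ > n³`, the map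
`x ↦ (fₙ(x)/(K n²))ₙ`, with `K = Σ 1/n²`, is a coarse embedding of `M` into the
ℓ₁-sum `(Σₙ ⊕ X)₁`. -/
theorem coarseEmbedding_weighted_ell1_sum {M X : Type*} [MetricSpace M]
    [NormedAddCommGroup X] [NormedSpace ℝ X] [CompleteSpace X]
    (O : M) (f : ℕ → M → X)
    (hLip : ∀ n : ℕ, 1 ≤ n → LipschitzWith 1 (f n))
    (hO : ∀ n : ℕ, 1 ≤ n → f n O = 0)
    (hsep : ∀ n : ℕ, 1 ≤ n → ∃ N : ℝ, ∀ x y : M,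
      N ≤ dist x y → ((n : ℝ)) ^ 3 < ‖f n x - f n y‖)
    (K : ℝ) (hK : K = ∑' n : ℕ, 1 / ((n : ℝ) + 1) ^ 2) :
    ∃ F : M → lp (fun _ : ℕ => X) 1,
      (∀ (x : M) (n : ℕ), (F x : ∀ _ : ℕ, X) n
          = (1 / (K * ((n : ℝ) + 1) ^ 2)) • f (n + 1) x) ∧
      ∃ ρ₁ ρ₂ : ℝ → ℝ,
        (∀ x y : M, ρ₁ (dist x y) ≤ ‖F x - F y‖ ∧ ‖F x - F y‖ ≤ ρ₂ (dist x y)) ∧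
        Filter.Tendsto ρ₁ Filter.atTop Filter.atTop := by
  classical
  -- summability of the weights
  have hs : Summable (fun n : ℕ => 1 / ((n : ℝ) + 1) ^ 2) := by
    have : Summable (fun n : ℕ => 1 / ((n : ℝ)) ^ 2) :=
      Real.summable_one_div_nat_pow.mpr one_lt_two
    have := (summable_nat_add_iff 1).mpr this
    simpa using this
  have hKpos : 0 < K := by
    rw [hK]
    exact Summable.tsum_pos hs (fun n => by positivity) 0 (by positivity)
  set c : ℕ → ℝ := fun n => 1 / (K * ((n : ℝ) + 1) ^ 2) with hc
  have hcpos : ∀ n, 0 < c n := fun n => by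
    have : (0:ℝ) < ((n:ℝ)+1)^2 := by positivity
    positivity
  have hcs : Summable c := by
    have := hs.mul_left (1 / K)
    refine this.congr (fun n => ?_)
    simp only [hc]
    rw [one_div_mul_one_div]
  -- Lipschitz bound
  have hlipb : ∀ n x y, ‖f (n+1) x - f (n+1) y‖ ≤ dist x y := by
    intro n x y
    have := (hLip (n+1) (by omega)).dist_le_mul x y
    simpa [dist_eq_norm] using this
  -- membership
  have hmem : ∀ x : M, Memℓp (fun n : ℕ => c n • f (n+1) x) 1 := by
    intro x
    apply memℓp_gen
    have h1 : ∀ n : ℕ, ‖c n • f (n+1) x‖ ≤ c n * dist x O := by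
      intro n
      rw [norm_smul, Real.norm_eq_abs, abs_of_pos (hcpos n)]
      have := hlipb n x O
      rw [hO (n+1) (by omega), sub_zero] at this
      exact mul_le_mul_of_nonneg_left this (hcpos n).le
    have : Summable (fun n : ℕ => c n * dist x O) := hcs.mul_right _
    simp only [ENNReal.toReal_one, Real.rpow_one]
    exact this.of_nonneg_of_le (fun n => norm_nonneg _) h1
  set F : M → lp (fun _ : ℕ => X) 1 := fun x => ⟨_, hmem x⟩ with hF
  have hFcoe : ∀ (x : M) (n : ℕ), (F x : ∀ _ : ℕ, X) n = c n • f (n+1) x := fun _ _ => rfl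
  have hdiff : ∀ x y n, ((F x - F y : lp (fun _ : ℕ => X) 1) : ∀ _ : ℕ, X) n
      = c n • (f (n+1) x - f (n+1) y) := by
    intro x y n
    rw [lp.coeFn_sub, Pi.sub_apply, hFcoe, hFcoe, smul_sub]
  have hnormcoord : ∀ x y n, ‖((F x - F y : lp (fun _ : ℕ => X) 1) : ∀ _ : ℕ, X) n‖
      = c n * ‖f (n+1) x - f (n+1) y‖ := by
    intro x y n
    rw [hdiff, norm_smul, Real.norm_eq_abs, abs_of_pos (hcpos n)]
  -- norm as tsum
  have hnorm : ∀ x y, ‖F x - F y‖ = ∑' n, c n * ‖f (n+1) x - f (n+1) y‖ := by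
    intro x y
    have h0 := lp.norm_eq_tsum_rpow (p := 1) (by norm_num) (F x - F y)
    norm_num [ENNReal.toReal_one] at h0
    rw [h0]
    exact tsum_congr (hnormcoord x y)
  -- thresholds
  have hsep' : ∀ n : ℕ, ∃ N : ℝ, ∀ x y : M,
      N ≤ dist x y → (((n:ℝ)+1)) ^ 3 < ‖f (n+1) x - f (n+1) y‖ := by
    intro n
    obtain ⟨N, hN⟩ := hsep (n+1) (by omega)
    exact ⟨N, fun x y h => by simpa [Nat.cast_add] using hN x y h⟩
  choose N hN using hsep'
  set T : ℕ → ℝ := fun n => max (N n) ((n:ℝ) + 1) with hT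
  set S : ℝ → Finset ℕ := fun t => (Finset.range (⌊t⌋₊)).filter (fun n => T n ≤ t) with hS
  have hmemS : ∀ t n, T n ≤ t → n ∈ S t := by
    intro t n h
    have h1 : ((n:ℝ) + 1) ≤ t := le_trans (le_max_right _ _) h
    have : (n + 1 : ℕ) ≤ ⌊t⌋₊ := Nat.le_floor (by exact_mod_cast h1)
    exact Finset.mem_filter.2 ⟨Finset.mem_range.2 (by omega), h⟩
  set ρ₁ : ℝ → ℝ := fun t => ((S t).sup (fun n => n + 1) : ℕ) / K with hρ₁
  -- coordinate lower bound
  have hcoord : ∀ x y n, T n ≤ dist x y → ((n:ℝ)+1) / K ≤ ‖F x - F y‖ := by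
    intro x y n h
    have h1 : N n ≤ dist x y := le_trans (le_max_left _ _) h
    have h2 := hN n x y h1
    have h3 : ‖((F x - F y : lp (fun _ : ℕ => X) 1) : ∀ _ : ℕ, X) n‖ ≤ ‖F x - F y‖ :=
      lp.norm_apply_le_norm one_ne_zero _ n
    rw [hnormcoord] at h3
    refine le_trans ?_ h3
    have hKne : K ≠ 0 := hKpos.ne'
    have hne : ((n:ℝ)+1) ≠ 0 := by positivity
    have heq : ((n:ℝ)+1)/K = c n * ((n:ℝ)+1)^3 := by
      rw [hc]; field_simp
    rw [heq]
    exact mul_le_mul_of_nonneg_left h2.le (hcpos n).le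
  refine ⟨F, fun x n => rfl, ρ₁, fun t => t / K * (∑' n, c n) * K, fun x y => ⟨?_, ?_⟩, ?_⟩
  · -- lower bound
    rcases (S (dist x y)).eq_empty_or_nonempty with he | hne
    · simp only [hρ₁, he, Finset.sup_empty, bot_eq_zero, Nat.cast_zero, zero_div]
      exact norm_nonneg _
    · obtain ⟨n, hn, hsup⟩ := Finset.exists_mem_eq_sup _ hne (fun n => n + 1)
      have := hcoord x y n (Finset.mem_filter.1 hn).2
      simp only [hρ₁, hsup]
      push_cast
      exact this
  · -- upper bound
    rw [hnorm]
    have hsum1 : Summable (fun n => c n * ‖f (n+1) x - f (n+1) y‖) := by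
      apply (hcs.mul_right (dist x y)).of_nonneg_of_le
        (fun n => by positivity)
        (fun n => mul_le_mul_of_nonneg_left (hlipb n x y) (hcpos n).le)
    calc ∑' n, c n * ‖f (n+1) x - f (n+1) y‖ ≤ ∑' n, c n * dist x y := by
          apply Summable.tsum_le_tsum _ hsum1 (hcs.mul_right _)
          exact fun n => mul_le_mul_of_nonneg_left (hlipb n x y) (hcpos n).le
      _ = dist x y / K * (∑' n, c n) * K := by
          rw [tsum_mul_right]
          field_simp
  · -- tendsto
    rw [Filter.tendsto_atTop]
    intro C
    obtain ⟨m, hm⟩ := exists_nat_ge (C * K)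
    filter_upwards [Filter.eventually_ge_atTop (T m)] with t ht
    have hmS : m ∈ S t := hmemS t m ht
    have : m + 1 ≤ (S t).sup (fun n => n + 1) := Finset.le_sup hmS
    have hcast : ((m:ℝ) + 1) ≤ (((S t).sup (fun n => n + 1) : ℕ) : ℝ) := by exact_mod_cast this
    simp only [hρ₁]
    rw [le_div_iff₀ hKpos]
    nlinarith [hm]
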